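/- Let φ = (1+√5)/2. The unique positive root x₀ of x^5 − 4x − 3 satisfies x₀ < φ^{5/2}, and hence the similarity dimension d = 2 log_φ x₀ of the (5,0,1)-Ammann Chair Fractal is strictly less than 2. -/
import Mathlib


theorem root_lt_phi_pow (x₀ : ℝ) (hx : 0 < x₀) (hroot : x₀ ^ 5 - 4 * x₀ - 3 = 0) :
    x₀ < ((1 + Real.sqrt 5) / 2) ^ ((5 : ℝ) / 2) ∧
    2 * Real.log x₀ / Real.log ((1 + Real.sqrt 5) / 2) < 2 := by
  set s := Real.sqrt 5 with hs
  have hs2 : s ^ 2 = 5 := Real.sq_sqrt (by norm_num)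
  have hsgt : 2 < s := by nlinarith [Real.sq_sqrt (show (0:ℝ) ≤ 5 by norm_num), Real.sqrt_nonneg 5]
  set φ := (1 + s) / 2 with hφ
  have hφ1 : 1 < φ := by rw [hφ]; linarith
  have hφ32 : (3:ℝ)/2 < φ := by rw [hφ]; linarith
  have hφ5 : φ ^ 5 = 5 * φ + 3 := by
    rw [hφ]; linear_combination ((s^3 + 5*s^2 + 15*s + 35)/32) * hs2
  have hx1 : 1 < x₀ := by
    by_contra h
    push_neg at h
    have h5 : x₀ ^ 5 ≤ 1 := pow_le_one₀ hx.le h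
    linarith
  have hxφ : x₀ < φ := by
    by_contra h
    push_neg at h
    have hfac : 0 ≤ (x₀ - φ) * (x₀^4 + x₀^3*φ + x₀^2*φ^2 + x₀*φ^3 + φ^4 - 4) := by
      apply mul_nonneg (by linarith)
      have h1 : (3/2:ℝ)^4 < φ^4 := pow_lt_pow_left₀ hφ32 (by norm_num) (by norm_num)
      have h2 : (1:ℝ) ≤ x₀^4 := one_le_pow₀ hx1.le
      have h3 : (0:ℝ) < x₀^3*φ := by positivity
      have h4 : (0:ℝ) < x₀^2*φ^2 := by positivity
      have h5 : (0:ℝ) < x₀*φ^3 := by positivity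
      nlinarith
    nlinarith [hfac, hroot, hφ5, hφ1]
  have hrp : φ < φ ^ ((5:ℝ)/2) := by
    calc φ = φ ^ (1:ℝ) := (Real.rpow_one φ).symm
    _ < φ ^ ((5:ℝ)/2) := Real.rpow_lt_rpow_of_exponent_lt hφ1 (by norm_num)
  refine ⟨hxφ.trans hrp, ?_⟩
  have hlogφ : 0 < Real.log φ := Real.log_pos hφ1
  rw [div_lt_iff₀ hlogφ]
  have := Real.log_lt_log hx hxφ
  linarith
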